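/- For n ≥ m ≥ 0, the word of maximal length containing at most m twos all of whose predecessors in the Young–Fibonacci order have a prefix of ones of length at most n is 1^n 2 1^{n−1} 2 ⋯ 1^{n−m+1} 2 1^{n−m}, and its number of digits equals n + mn − (m² − m)/2. -/

import Mathlib

inductive YFDigit : Type
  | one : YFDigit
  | two : YFDigit
  deriving DecidableEq, Repr

abbrev YFWord := List YFDigit

namespace YFWord

/-- value of a digit -/
def digitVal : YFDigit → ℕ
  | .one => 1
  | .two => 2

/-- digit sum of a word -/
def dsum (v : YFWord) : ℕ := (v.map digitVal).sum

/-- number of 2's in a word -/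
def twos (v : YFWord) : ℕ := v.count YFDigit.two

/-- longest common prefix of two lists -/
def commonPrefix : YFWord → YFWord → YFWord
  | a :: x, b :: y => if a = b then a :: commonPrefix x y else []
  | _, _ => []

/-- longest common suffix -/
def lcs (x y : YFWord) : YFWord := (commonPrefix x.reverse y.reverse).reverse

/-- the prefix of `x` remaining after deleting the longest common suffix of `x` and `y` -/
def rem (x y : YFWord) : YFWord := x.take (x.length - (lcs x y).length)

/-- the Young–Fibonacci order: x ≤ y iff, after removing the longest common suffix,
the remaining prefix of `y` has at least as many 2's as the remaining prefix of `x` has digits -/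
def yfLE (x y : YFWord) : Prop := (rem x y).length ≤ twos (rem y x)

/-- strict Young–Fibonacci order -/
def yfLT (x y : YFWord) : Prop := yfLE x y ∧ ¬ yfLE y x

/-- `y` covers `x` in the Young–Fibonacci order -/
def covers (x y : YFWord) : Prop := yfLT x y ∧ ∀ z, ¬ (yfLT x z ∧ yfLT z y)

end YFWord

open YFWord

namespace YFWord

/-- the word 1^n 2 1^{n-1} 2 ⋯ 1^{n-m+1} 2 1^{n-m} -/
def stair : ℕ → ℕ → YFWord
  | n, 0 => List.replicate n YFDigit.one
  | n, m + 1 => List.replicate n YFDigit.one ++ YFDigit.two :: stair (n - 1) m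

/-- the length of the maximal prefix of ones of a word -/
def onesPrefixLen (v : YFWord) : ℕ := (v.takeWhile (fun d => d == YFDigit.one)).length

end YFWord

namespace YFAux

open YFWord List

lemma digit_cases (d : YFDigit) : d = YFDigit.one ∨ d = YFDigit.two := by
  cases d <;> simp

/- ### commonPrefix lemmas -/

lemma cp_comm : ∀ x y : YFWord, commonPrefix x y = commonPrefix y x
  | [], [] => by simp [commonPrefix]
  | [], _ :: _ => by simp [commonPrefix]
  | _ :: _, [] => by simp [commonPrefix]
  | a :: x, b :: y => by
    simp only [commonPrefix]
    by_cases hab : a = b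
    · subst hab; simp [cp_comm x y]
    · simp [hab, Ne.symm hab]

lemma cp_self : ∀ x : YFWord, commonPrefix x x = x
  | [] => by simp [commonPrefix]
  | a :: x => by simp [commonPrefix, cp_self x]

lemma cp_prefix : ∀ x y : YFWord, commonPrefix x y <+: x
  | [], [] => by simp [commonPrefix]
  | [], _ :: _ => by simp [commonPrefix]
  | _ :: _, [] => by simp [commonPrefix]
  | a :: x, b :: y => by
    simp only [commonPrefix]
    by_cases hab : a = b
    · subst hab; simpa using cp_prefix x y
    · simp [hab]

lemma cp_max : ∀ (p x y : YFWord), p <+: x → p <+: y → p <+: commonPrefix x y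
  | [], _, _, _, _ => by simp
  | a :: p, x, y, hx, hy => by
    obtain ⟨tx, rfl⟩ := hx
    obtain ⟨ty, rfl⟩ := hy
    simp only [List.cons_append, commonPrefix, if_pos rfl]
    obtain ⟨t, ht⟩ := cp_max p (p ++ tx) (p ++ ty) ⟨tx, rfl⟩ ⟨ty, rfl⟩
    exact ⟨t, by simp [← ht]⟩

/- ### lcs lemmas -/

lemma lcs_comm (x y : YFWord) : lcs x y = lcs y x := by
  simp [lcs, cp_comm]

lemma lcs_self (x : YFWord) : lcs x x = x := by
  simp [lcs, cp_self]

lemma lcs_suffix_left (x y : YFWord) : lcs x y <:+ x := by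
  have h := cp_prefix x.reverse y.reverse
  rw [lcs, ← List.reverse_suffix] at *
  simpa using h

lemma lcs_suffix_right (x y : YFWord) : lcs x y <:+ y := by
  rw [lcs_comm]; exact lcs_suffix_left y x

lemma lcs_max {v x y : YFWord} (hx : v <:+ x) (hy : v <:+ y) : v <:+ lcs x y := by
  rw [← List.reverse_prefix] at hx hy ⊢
  simpa [lcs] using cp_max v.reverse x.reverse y.reverse hx hy

lemma rem_append_lcs (x y : YFWord) : rem x y ++ lcs x y = x := by
  obtain ⟨t, ht⟩ := lcs_suffix_left x y
  have hl : x.length - (lcs x y).length = t.length := by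
    have := congrArg List.length ht
    simp at this
    omega
  have : rem x y = t := by
    rw [rem, hl, ← ht, List.take_left]
  rw [this, ht]

lemma rem_length (x y : YFWord) : (rem x y).length = x.length - (lcs x y).length := by
  rw [rem, List.length_take]
  omega

lemma yfLE_refl (z : YFWord) : yfLE z z := by
  have : (rem z z).length = 0 := by
    rw [rem_length, lcs_self]
    omega
  rw [yfLE, this]
  exact Nat.zero_le _

/- ### onesPrefixLen lemmas -/

lemma opl_nil : onesPrefixLen [] = 0 := rfl

lemma opl_cons_two (v : YFWord) : onesPrefixLen (YFDigit.two :: v) = 0 := by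
  simp [onesPrefixLen, List.takeWhile_cons]

lemma opl_cons_one (v : YFWord) :
    onesPrefixLen (YFDigit.one :: v) = 1 + onesPrefixLen v := by
  simp [onesPrefixLen, List.takeWhile]
  omega

lemma opl_replicate_append (k : ℕ) (v : YFWord) :
    onesPrefixLen (List.replicate k YFDigit.one ++ v) = k + onesPrefixLen v := by
  induction k with
  | zero => simp
  | succ k ih =>
    rw [List.replicate_succ, List.cons_append, opl_cons_one, ih]
    omega

lemma opl_replicate (k : ℕ) : onesPrefixLen (List.replicate k YFDigit.one) = k := by
  simpa [opl_nil] using opl_replicate_append k []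

lemma opl_le_length (v : YFWord) : onesPrefixLen v ≤ v.length := by
  exact (List.takeWhile_prefix _).length_le

lemma opl_append_le : ∀ (a b : YFWord),
    onesPrefixLen (a ++ b) ≤ a.length + onesPrefixLen b
  | [], b => by simp
  | d :: a, b => by
    rcases digit_cases d with rfl | rfl
    · rw [List.cons_append, opl_cons_one]
      have := opl_append_le a b
      simp only [List.length_cons]
      omega
    · rw [List.cons_append, opl_cons_two]
      exact Nat.zero_le _

/- ### twos lemmas -/

lemma twos_append (a b : YFWord) : twos (a ++ b) = twos a + twos b := by
  simp [twos, List.count_append]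

lemma twos_replicate_one (k : ℕ) : twos (List.replicate k YFDigit.one) = 0 := by
  simp [twos, List.count_replicate]

lemma twos_cons_two (v : YFWord) : twos (YFDigit.two :: v) = twos v + 1 := by
  simp [twos, List.count_cons]

lemma twos_cons_one (v : YFWord) : twos (YFDigit.one :: v) = twos v := by
  simp [twos, List.count_cons]

lemma replicate_of_suffix {l : YFWord} {k : ℕ}
    (h : l <:+ List.replicate k YFDigit.one) : l = List.replicate l.length YFDigit.one := by
  refine List.eq_replicate_iff.mpr ⟨rfl, fun b hb => ?_⟩
  have : b ∈ List.replicate k YFDigit.one := h.sublist.mem hb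
  exact List.eq_of_mem_replicate this

lemma all_ones_of_twos_zero {w : YFWord} (h : twos w = 0) :
    w = List.replicate w.length YFDigit.one := by
  refine List.eq_replicate_iff.mpr ⟨rfl, fun b hb => ?_⟩
  rcases digit_cases b with rfl | rfl
  · rfl
  · exact absurd (List.count_eq_zero.mp h hb) (by simp)

lemma decomp {w : YFWord} (h : twos w ≠ 0) :
    ∃ a w', w = List.replicate a YFDigit.one ++ YFDigit.two :: w' := by
  induction w with
  | nil => simp [twos] at h
  | cons d t ih =>
    rcases digit_cases d with rfl | rfl
    · rw [twos_cons_one] at h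
      obtain ⟨a, w', rfl⟩ := ih h
      exact ⟨a + 1, w', by rw [List.replicate_succ]; simp⟩
    · exact ⟨0, t, by simp⟩

lemma split_append {a b c d : YFWord} (h : a ++ b = c ++ d) (hl : c.length ≤ a.length) :
    ∃ e, a = c ++ e ∧ d = e ++ b := by
  rcases List.append_eq_append_iff.mp h with ⟨a', h1, h2⟩ | ⟨c', h1, h2⟩
  · have hlen := congrArg List.length h1
    simp at hlen
    have : a' = [] := List.eq_nil_of_length_eq_zero (by omega)
    subst this
    exact ⟨[], by simpa using h1.symm, by simpa using h2.symm⟩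
  · exact ⟨c', h1, h2⟩

/- ### key order lemmas -/

lemma yfLE_construct (u v : YFWord) (k : ℕ) (hk : k ≤ twos u) :
    yfLE (List.replicate k YFDigit.one ++ v) (u ++ v) := by
  set z := List.replicate k YFDigit.one ++ v with hz
  set w := u ++ v with hw
  have hvz : v <:+ z := ⟨List.replicate k YFDigit.one, rfl⟩
  have hvw : v <:+ w := ⟨u, rfl⟩
  have hvL : v <:+ lcs z w := lcs_max hvz hvw
  obtain ⟨L', hL'⟩ := hvL
  have hLz : lcs z w <:+ z := lcs_suffix_left z w
  obtain ⟨t, ht⟩ := hLz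
  rw [← hL'] at ht
  have ht' : (t ++ L') ++ v = List.replicate k YFDigit.one ++ v := by
    simpa [List.append_assoc] using ht
  have htL : t ++ L' = List.replicate k YFDigit.one := List.append_cancel_right ht'
  have hL'rep : L' = List.replicate L'.length YFDigit.one :=
    replicate_of_suffix ⟨t, htL⟩
  have hL'len : L'.length ≤ k := by
    have := congrArg List.length htL
    simp at this
    omega
  -- rem w z
  have hw_split : rem w z ++ lcs w z = w := rem_append_lcs w z
  have hw_split' : rem w z ++ (L' ++ v) = u ++ v := by
    rw [lcs_comm w z, ← hL'] at hw_split
    exact hw_split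
  have hu : rem w z ++ L' = u :=
    List.append_cancel_right (by simpa [List.append_assoc] using hw_split')
  have htwos : twos (rem w z) = twos u := by
    rw [← hu, twos_append, hL'rep, twos_replicate_one]
    omega
  -- rem z w length
  have hlen : (rem z w).length = k - L'.length := by
    rw [rem_length, ← hL']
    have := congrArg List.length ht
    simp [hz] at this ⊢
    omega
  rw [yfLE, hlen, htwos]
  omega

lemma opl_bound {z w : YFWord} (h : yfLE z w) :
    onesPrefixLen z ≤ twos (rem w z) + onesPrefixLen (lcs z w) := by
  have hsplit : rem z w ++ lcs z w = z := rem_append_lcs z w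
  calc onesPrefixLen z = onesPrefixLen (rem z w ++ lcs z w) := by rw [hsplit]
    _ ≤ (rem z w).length + onesPrefixLen (lcs z w) := opl_append_le _ _
    _ ≤ twos (rem w z) + onesPrefixLen (lcs z w) := by
        have := h
        rw [yfLE] at this
        omega

/- ### stair lemmas -/

lemma twos_stair : ∀ m n, twos (stair n m) = m
  | 0, n => by simp [stair, twos_replicate_one]
  | m + 1, n => by
    rw [stair, twos_append, twos_replicate_one, twos_cons_two, twos_stair m (n-1)]
    omega

lemma stair_length_rec (n m : ℕ) :
    (stair n (m+1)).length = n + 1 + (stair (n-1) m).length := by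
  simp [stair]
  omega

lemma stair_suffix_bound : ∀ m n u s, m ≤ n → u ++ s = stair n m →
    twos u + onesPrefixLen s ≤ n := by
  intro m
  induction m with
  | zero =>
    intro n u s _ hus
    rw [stair] at hus
    have hall : ∀ b ∈ u, b = YFDigit.one := by
      intro b hb
      have hb' : b ∈ List.replicate n YFDigit.one := by
        rw [← hus]; exact List.mem_append_left s hb
      exact List.eq_of_mem_replicate hb'
    have htwos : twos u = 0 := List.count_eq_zero.mpr (fun hmem => by
      have := hall _ hmem
      simp at this)
    have hslen : onesPrefixLen s ≤ s.length := opl_le_length s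
    have hlen : u.length + s.length = n := by
      have := congrArg List.length hus
      simpa using this
    omega
  | succ m ih =>
    intro n u s hmn hus
    rw [stair] at hus
    by_cases hul : u.length ≤ n
    · -- u is within the initial block of ones
      have hu : u = List.take u.length (List.replicate n YFDigit.one) := by
        have : u = List.take u.length (u ++ s) := by simp
        rw [this, hus, List.take_append_of_le_length (by simpa using hul)]
        simp
      have hu' : u = List.replicate u.length YFDigit.one := by
        rw [hu, List.take_replicate, Nat.min_eq_left hul]
        simp
      have hs : s = List.replicate (n - u.length) YFDigit.one ++
          YFDigit.two :: stair (n-1) m := by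
        have : s = List.drop u.length (u ++ s) := by simp
        rw [this, hus, List.drop_append_of_le_length (by simpa using hul)]
        simp [List.drop_replicate]
      have htwos : twos u = 0 := by rw [hu', twos_replicate_one]
      have hopl : onesPrefixLen s = n - u.length := by
        rw [hs, opl_replicate_append, opl_cons_two]
        omega
      omega
    · -- u extends past the 2
      push_neg at hul
      have hus' : u ++ s = (List.replicate n YFDigit.one ++ [YFDigit.two]) ++ stair (n-1) m := by
        rw [hus]; simp
      obtain ⟨u', hu, hs⟩ := split_append hus' (by simp; omega)
      have ihres := ih (n-1) u' s (by omega) hs.symm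
      have htwos : twos u = twos u' + 1 := by
        rw [hu, twos_append, twos_append, twos_replicate_one]
        simp [twos]
        omega
      omega

lemma stair_pred (n m : ℕ) (hmn : m ≤ n) :
    ∀ z : YFWord, yfLE z (stair n m) → onesPrefixLen z ≤ n := by
  intro z hz
  have h1 := opl_bound hz
  have h2 : rem (stair n m) z ++ lcs z (stair n m) = stair n m := by
    rw [lcs_comm z (stair n m)]
    exact rem_append_lcs (stair n m) z
  exact le_trans h1 (stair_suffix_bound m n _ _ hmn h2)

lemma transfer {a n : ℕ} {w' : YFWord}
    (H : ∀ z, yfLE z (List.replicate a YFDigit.one ++ YFDigit.two :: w') →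
      onesPrefixLen z ≤ n) :
    ∀ z, yfLE z w' → onesPrefixLen z ≤ n - 1 := by
  intro z hz
  have hsplit : rem w' z ++ lcs z w' = w' := by
    rw [lcs_comm z w']
    exact rem_append_lcs w' z
  have hu : (List.replicate a YFDigit.one ++ YFDigit.two :: rem w' z) ++ lcs z w' =
      List.replicate a YFDigit.one ++ YFDigit.two :: w' := by
    conv_rhs => rw [← hsplit]
    simp
  have htwosu : twos (rem w' z) + 1 ≤
      twos (List.replicate a YFDigit.one ++ YFDigit.two :: rem w' z) := by
    rw [twos_append, twos_replicate_one, twos_cons_two]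
    omega
  have hz2 : yfLE (List.replicate (twos (rem w' z) + 1) YFDigit.one ++ lcs z w')
      (List.replicate a YFDigit.one ++ YFDigit.two :: w') := by
    rw [← hu]
    exact yfLE_construct _ _ _ htwosu
  have h2 := H _ hz2
  rw [opl_replicate_append] at h2
  have h3 := opl_bound hz
  omega

lemma main_max : ∀ m n (w : YFWord), m ≤ n → twos w ≤ m →
    (∀ z, yfLE z w → onesPrefixLen z ≤ n) →
    w.length ≤ (stair n m).length ∧
      (w.length = (stair n m).length → w = stair n m) := by
  intro m
  induction m with
  | zero =>
    intro n w hmn htw H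
    have h0 : twos w = 0 := by omega
    have hw : w = List.replicate w.length YFDigit.one := all_ones_of_twos_zero h0
    have hlen : onesPrefixLen w = w.length := by
      conv_lhs => rw [hw]
      rw [opl_replicate]
    have hwn : w.length ≤ n := by
      have := H w (yfLE_refl w)
      omega
    have hst : (stair n 0).length = n := by simp [stair]
    refine ⟨by omega, fun he => ?_⟩
    rw [stair]
    conv_lhs => rw [hw]
    congr 1
    omega
  | succ m ih =>
    intro n w hmn htw H
    by_cases h0 : twos w = 0
    · have hw : w = List.replicate w.length YFDigit.one := all_ones_of_twos_zero h0
      have hlen : onesPrefixLen w = w.length := by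
        conv_lhs => rw [hw]
        rw [opl_replicate]
      have hwn : w.length ≤ n := by
        have := H w (yfLE_refl w)
        omega
      have hst := stair_length_rec n m
      refine ⟨by omega, fun he => ?_⟩
      omega
    · obtain ⟨a, w', rfl⟩ := decomp h0
      have htw' : twos w' ≤ m := by
        rw [twos_append, twos_replicate_one, twos_cons_two] at htw
        omega
      have H' := transfer H
      have ihres := ih (n-1) w' (by omega) htw' H'
      have ha : a ≤ n := by
        have h1 := H _ (yfLE_refl _)
        rw [opl_replicate_append, opl_cons_two] at h1
        omega
      have hlenw : (List.replicate a YFDigit.one ++ YFDigit.two :: w').length =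
          a + 1 + w'.length := by simp; omega
      have hst := stair_length_rec n m
      refine ⟨by omega, fun he => ?_⟩
      have hwlen : w'.length = (stair (n-1) m).length := by omega
      have han : a = n := by omega
      have hw' := ihres.2 hwlen
      rw [stair, han, hw']

lemma stair_length_formula : ∀ m n, m ≤ n →
    (stair n m).length = n + m * n - (m ^ 2 - m) / 2 := by
  intro m
  induction m with
  | zero => intro n _; simp [stair]
  | succ m ih =>
    intro n hmn
    rw [stair_length_rec, ih (n-1) (by omega)]
    have hsq : m ^ 2 = m * m := sq m
    have hsq' : (m + 1) ^ 2 = m * m + 2 * m + 1 := by ring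
    have hmuln : (m + 1) * n = m * n + n := by ring
    have hmul : m * (n - 1) + m = m * n := by
      have hn : n - 1 + 1 = n := by omega
      calc m * (n - 1) + m = m * ((n - 1) + 1) := by ring
        _ = m * n := by rw [hn]
    have hmB : m ≤ m * m := by
      rcases Nat.eq_zero_or_pos m with hm | hm
      · simp [hm]
      · calc m = m * 1 := (Nat.mul_one m).symm
          _ ≤ m * m := Nat.mul_le_mul_left m hm
    have hBA : m * m ≤ m * n := Nat.mul_le_mul_left m (by omega)
    rw [hsq, hsq', hmuln]
    generalize hB : m * m = B at hmB hBA ⊢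
    generalize hA : m * n = A at hmul hBA ⊢
    generalize hC : m * (n - 1) = C at hmul ⊢
    omega

end YFAux

open YFAux in
theorem yf_stair_maximal (n m : ℕ) (h : m ≤ n) :
    (twos (stair n m) ≤ m ∧ ∀ z : YFWord, yfLE z (stair n m) → onesPrefixLen z ≤ n) ∧
    (∀ w : YFWord,
      (twos w ≤ m ∧ ∀ z : YFWord, yfLE z w → onesPrefixLen z ≤ n) →
        w.length ≤ (stair n m).length) ∧
    (∀ w : YFWord,
      (twos w ≤ m ∧ ∀ z : YFWord, yfLE z w → onesPrefixLen z ≤ n) →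
        w.length = (stair n m).length → w = stair n m) ∧
    (stair n m).length = n + m * n - (m ^ 2 - m) / 2 := by
  refine ⟨⟨le_of_eq (twos_stair m n), stair_pred n m h⟩, ?_, ?_, stair_length_formula m n h⟩
  · intro w ⟨h1, h2⟩
    exact (main_max m n w h h1 h2).1
  · intro w ⟨h1, h2⟩
    exact (main_max m n w h h1 h2).2
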